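/- Define ℚ₀ := {2k/(2n−1) : k ∈ ℤ, n ∈ ℕ} and ℚ₁ := {(2k−1)/(2n−1) : k ∈ ℤ, n ∈ ℕ}. Then ℚ₀ and ℚ₁ are disjoint subsets of ℚ satisfying ℚ₀+ℚ₀ ⊆ ℚ₀, ℚ₀+ℚ₁ ⊆ ℚ₁, ℚ₁+ℚ₁ ⊆ ℚ₀, ℚ₀·ℚ₀ ⊆ ℚ₀, ℚ₀·ℚ₁ ⊆ ℚ₀ and ℚ₁·ℚ₁ ⊆ ℚ₁. Moreover, let I ⊆ ℝ be an interval such that a := sup I belongs to I ∩ ℚ₁, let h : I → ℝ be any convex function, and define f : I → ℝ̄ by f(x) := h(x) if x ∈ (I ∩ ℚ₀) ∪ {a} and f(x) := +∞ otherwise. Then for every t ∈ (0,1) ∩ ℚ₁, the function f is upper A_t-convex but is not upper A_{1−t}-convex. -/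

import Mathlib

open Classical in
/-- The lower sum `x ∔ y` on the extended reals: `x + y` if both are `> -∞`
(with `(+∞) ∔ (+∞) = +∞`), and `-∞` as soon as one summand is `-∞`. -/
noncomputable def lsum (a b : EReal) : EReal := if a = ⊥ ∨ b = ⊥ then ⊥ else a + b

open Classical in
/-- The upper sum `x ⊎ y` on the extended reals: `x + y` if both are `< +∞`
(with `(-∞) ⊎ (-∞) = -∞`), and `+∞` as soon as one summand is `+∞`. -/
noncomputable def usum (a b : EReal) : EReal := if a = ⊤ ∨ b = ⊤ then ⊤ else a + b

/-- The lower second-order divided difference `⌊x,y,z;f⌋`. -/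
noncomputable def ldd (f : ℝ → EReal) (x y z : ℝ) : EReal :=
  lsum (lsum (((1 / ((y - x) * (z - x)) : ℝ) : EReal) * f x)
             (((1 / ((x - y) * (z - y)) : ℝ) : EReal) * f y))
       (((1 / ((x - z) * (y - z)) : ℝ) : EReal) * f z)

/-- The upper second-order divided difference `⌈x,y,z;f⌉`. -/
noncomputable def udd (f : ℝ → EReal) (x y z : ℝ) : EReal :=
  usum (usum (((1 / ((y - x) * (z - x)) : ℝ) : EReal) * f x)
             (((1 / ((x - y) * (z - y)) : ℝ) : EReal) * f y))
       (((1 / ((x - z) * (y - z)) : ℝ) : EReal) * f z)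

/-- `f : I → ℝ̄` is lower `M`-convex: `⌊x, M(x,y), y; f⌋ ≥ 0` for all `x < y` in `I`. -/
def LowerConvexWrt (I : Set ℝ) (M : ℝ → ℝ → ℝ) (f : ℝ → EReal) : Prop :=
  ∀ x ∈ I, ∀ y ∈ I, x < y → 0 ≤ ldd f x (M x y) y

/-- `f : I → ℝ̄` is upper `M`-convex: `⌈x, M(x,y), y; f⌉ ≥ 0` for all `x < y` in `I`. -/
def UpperConvexWrt (I : Set ℝ) (M : ℝ → ℝ → ℝ) (f : ℝ → EReal) : Prop :=
  ∀ x ∈ I, ∀ y ∈ I, x < y → 0 ≤ udd f x (M x y) y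

/-- The set `ℚ₀ = {2k/(2n-1) : k ∈ ℤ, n ∈ ℕ}` (as a subset of `ℝ`). -/
def Qzero : Set ℝ :=
  {x | ∃ k : ℤ, ∃ n : ℕ, 1 ≤ n ∧ x = (2 * (k : ℝ)) / (2 * (n : ℝ) - 1)}

/-- The set `ℚ₁ = {(2k-1)/(2n-1) : k ∈ ℤ, n ∈ ℕ}` (as a subset of `ℝ`). -/
def Qone : Set ℝ :=
  {x | ∃ k : ℤ, ∃ n : ℕ, 1 ≤ n ∧ x = (2 * (k : ℝ) - 1) / (2 * (n : ℝ) - 1)}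


lemma usum_coe (a b : ℝ) : usum (a:EReal) (b:EReal) = ((a+b : ℝ) : EReal) := by
  simp [usum, EReal.coe_ne_top]
lemma usum_top_left (b : EReal) : usum ⊤ b = ⊤ := by simp [usum]
lemma usum_top_right (a : EReal) : usum a ⊤ = ⊤ := by simp [usum]
lemma usum_coe_bot (a : ℝ) : usum (a:EReal) ⊥ = ⊥ := by simp [usum, EReal.coe_ne_top]
lemma usum_bot_coe (a : ℝ) : usum ⊥ (a:EReal) = ⊥ := by simp [usum, EReal.coe_ne_top]

lemma mem_qzero_iff {x : ℝ} :
    x ∈ Qzero ↔ ∃ p q : ℤ, Even p ∧ Odd q ∧ 0 < q ∧ x = (p:ℝ)/(q:ℝ) := by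
  constructor
  · rintro ⟨k, n, hn, rfl⟩
    have hn' : (1:ℤ) ≤ (n:ℤ) := by exact_mod_cast hn
    refine ⟨2*k, 2*(n:ℤ)-1, ⟨k, by ring⟩, ⟨(n:ℤ)-1, by ring⟩, by omega, by push_cast; ring⟩
  · rintro ⟨p, q, ⟨k, hk⟩, ⟨m, hm⟩, hq, rfl⟩
    have hm0 : 0 ≤ m := by omega
    refine ⟨k, m.toNat + 1, Nat.le_add_left 1 _, ?_⟩
    have hmt : ((m.toNat : ℕ) : ℝ) = (m:ℝ) := by exact_mod_cast Int.toNat_of_nonneg hm0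
    push_cast [hmt]
    rw [hk, hm]; push_cast; ring

lemma mem_qone_iff {x : ℝ} :
    x ∈ Qone ↔ ∃ p q : ℤ, Odd p ∧ Odd q ∧ 0 < q ∧ x = (p:ℝ)/(q:ℝ) := by
  constructor
  · rintro ⟨k, n, hn, rfl⟩
    have hn' : (1:ℤ) ≤ (n:ℤ) := by exact_mod_cast hn
    refine ⟨2*k-1, 2*(n:ℤ)-1, ⟨k-1, by ring⟩, ⟨(n:ℤ)-1, by ring⟩, by omega, by push_cast; ring⟩
  · rintro ⟨p, q, ⟨k, hk⟩, ⟨m, hm⟩, hq, rfl⟩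
    have hm0 : 0 ≤ m := by omega
    refine ⟨k+1, m.toNat + 1, Nat.le_add_left 1 _, ?_⟩
    have hmt : ((m.toNat : ℕ) : ℝ) = (m:ℝ) := by exact_mod_cast Int.toNat_of_nonneg hm0
    push_cast [hmt]
    rw [hk, hm]; push_cast; ring

lemma qzero_sub_rat : Qzero ⊆ Set.range ((↑) : ℚ → ℝ) := by
  intro x hx
  obtain ⟨p, q, _, _, _, rfl⟩ := mem_qzero_iff.mp hx
  exact ⟨(p:ℚ)/(q:ℚ), by push_cast; ring⟩

lemma qone_sub_rat : Qone ⊆ Set.range ((↑) : ℚ → ℝ) := by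
  intro x hx
  obtain ⟨p, q, _, _, _, rfl⟩ := mem_qone_iff.mp hx
  exact ⟨(p:ℚ)/(q:ℚ), by push_cast; ring⟩

lemma qzero_qone_disj : Disjoint Qzero Qone := by
  rw [Set.disjoint_left]
  rintro x hx0 hx1
  obtain ⟨p, q, hp, hq, hqpos, rfl⟩ := mem_qzero_iff.mp hx0
  obtain ⟨p', q', hp', hq', hq'pos, heq⟩ := mem_qone_iff.mp hx1
  have hqne : ((q:ℝ)) ≠ 0 := by positivity
  have hq'ne : ((q':ℝ)) ≠ 0 := by positivity
  have h2 : (p:ℝ) * q' = p' * q := by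
    rw [div_eq_div_iff hqne hq'ne] at heq; exact heq
  have h3 : p * q' = p' * q := by exact_mod_cast h2
  have hev : Even (p * q') := hp.mul_right q'
  rw [h3] at hev
  exact (Int.not_odd_iff_even.mpr hev) (hp'.mul hq)

lemma add_div_helper {p q p' q' : ℤ} (hq : 0 < q) (hq' : 0 < q') :
    (p:ℝ)/q + (p':ℝ)/q' = ((p*q' + p'*q : ℤ) : ℝ) / ((q*q' : ℤ) : ℝ) := by
  have hqne : ((q:ℝ)) ≠ 0 := by positivity
  have hq'ne : ((q':ℝ)) ≠ 0 := by positivity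
  push_cast
  field_simp

lemma mul_div_helper (p q p' q' : ℤ) :
    ((p:ℝ)/q) * ((p':ℝ)/q') = ((p*p' : ℤ) : ℝ) / ((q*q' : ℤ) : ℝ) := by
  push_cast; rw [div_mul_div_comm]

lemma qzero_add_qzero : ∀ x ∈ Qzero, ∀ y ∈ Qzero, x + y ∈ Qzero := by
  intro x hx y hy
  obtain ⟨p, q, hp, hq, hqp, rfl⟩ := mem_qzero_iff.mp hx
  obtain ⟨p', q', hp', hq', hq'p, rfl⟩ := mem_qzero_iff.mp hy
  exact mem_qzero_iff.mpr ⟨_, _, (hp.mul_right q').add (hp'.mul_right q),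
    hq.mul hq', mul_pos hqp hq'p, add_div_helper hqp hq'p⟩

lemma qzero_add_qone : ∀ x ∈ Qzero, ∀ y ∈ Qone, x + y ∈ Qone := by
  intro x hx y hy
  obtain ⟨p, q, hp, hq, hqp, rfl⟩ := mem_qzero_iff.mp hx
  obtain ⟨p', q', hp', hq', hq'p, rfl⟩ := mem_qone_iff.mp hy
  exact mem_qone_iff.mpr ⟨_, _, (hp.mul_right q').add_odd (hp'.mul hq),
    hq.mul hq', mul_pos hqp hq'p, add_div_helper hqp hq'p⟩

lemma qone_add_qone : ∀ x ∈ Qone, ∀ y ∈ Qone, x + y ∈ Qzero := by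
  intro x hx y hy
  obtain ⟨p, q, hp, hq, hqp, rfl⟩ := mem_qone_iff.mp hx
  obtain ⟨p', q', hp', hq', hq'p, rfl⟩ := mem_qone_iff.mp hy
  exact mem_qzero_iff.mpr ⟨_, _, (hp.mul hq').add_odd (hp'.mul hq),
    hq.mul hq', mul_pos hqp hq'p, add_div_helper hqp hq'p⟩

lemma qzero_mul_qzero : ∀ x ∈ Qzero, ∀ y ∈ Qzero, x * y ∈ Qzero := by
  intro x hx y hy
  obtain ⟨p, q, hp, hq, hqp, rfl⟩ := mem_qzero_iff.mp hx
  obtain ⟨p', q', hp', hq', hq'p, rfl⟩ := mem_qzero_iff.mp hy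
  exact mem_qzero_iff.mpr ⟨_, _, hp.mul_right p',
    hq.mul hq', mul_pos hqp hq'p, mul_div_helper p q p' q'⟩

lemma qzero_mul_qone : ∀ x ∈ Qzero, ∀ y ∈ Qone, x * y ∈ Qzero := by
  intro x hx y hy
  obtain ⟨p, q, hp, hq, hqp, rfl⟩ := mem_qzero_iff.mp hx
  obtain ⟨p', q', hp', hq', hq'p, rfl⟩ := mem_qone_iff.mp hy
  exact mem_qzero_iff.mpr ⟨_, _, hp.mul_right p',
    hq.mul hq', mul_pos hqp hq'p, mul_div_helper p q p' q'⟩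

lemma qone_mul_qone : ∀ x ∈ Qone, ∀ y ∈ Qone, x * y ∈ Qone := by
  intro x hx y hy
  obtain ⟨p, q, hp, hq, hqp, rfl⟩ := mem_qone_iff.mp hx
  obtain ⟨p', q', hp', hq', hq'p, rfl⟩ := mem_qone_iff.mp hy
  exact mem_qone_iff.mpr ⟨_, _, hp.mul hp',
    hq.mul hq', mul_pos hqp hq'p, mul_div_helper p q p' q'⟩

lemma one_mem_qone : (1:ℝ) ∈ Qone := ⟨1, 1, le_refl 1, by norm_num⟩

lemma neg_mem_qone {x : ℝ} (hx : x ∈ Qone) : -x ∈ Qone := by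
  obtain ⟨p, q, hp, hq, hqp, rfl⟩ := mem_qone_iff.mp hx
  exact mem_qone_iff.mpr ⟨-p, q, (odd_neg).mpr hp, hq, hqp, by push_cast; ring⟩

lemma qzero_dense {b a : ℝ} (hba : b < a) : ∃ x ∈ Qzero, b < x ∧ x < a := by
  obtain ⟨n, hn⟩ := exists_nat_gt (max 1 (2/(a-b)))
  have hn1 : 1 ≤ n := by
    have h1n : (1:ℝ) < n := (le_max_left 1 (2/(a-b))).trans_lt hn
    exact_mod_cast h1n.le
  have hd : (0:ℝ) < 2*(n:ℝ)-1 := by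
    have : (1:ℝ) ≤ (n:ℝ) := by exact_mod_cast hn1
    linarith
  have hab : (0:ℝ) < a - b := sub_pos.mpr hba
  have hq2 : 2/(a-b) < 2*(n:ℝ)-1 := by
    have h1 := (le_max_right 1 (2/(a-b))).trans_lt hn
    have : (1:ℝ) ≤ (n:ℝ) := by exact_mod_cast hn1
    linarith
  have hkey : 2 < (a-b) * (2*(n:ℝ)-1) := by
    rw [div_lt_iff₀ hab] at hq2; linarith
  obtain ⟨q, hqdef⟩ : ∃ q : ℝ, q = 2*(n:ℝ)-1 := ⟨_, rfl⟩
  rw [← hqdef] at hd hkey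
  obtain ⟨k, hkdef⟩ : ∃ k : ℤ, k = ⌊b*q/2⌋ + 1 := ⟨_, rfl⟩
  have hfl : b*q/2 < (k:ℝ) := by
    rw [hkdef]; push_cast; exact Int.lt_floor_add_one _
  have hfl2 : (k:ℝ) ≤ b*q/2 + 1 := by
    rw [hkdef]; push_cast
    have := Int.floor_le (b*q/2); linarith
  refine ⟨2*(k:ℝ)/q, ⟨k, n, hn1, by rw [hqdef]⟩, ?_, ?_⟩
  · rw [lt_div_iff₀ hd]; linarith
  · rw [div_lt_iff₀ hd]
    have hexp : (a-b)*q = a*q - b*q := by ring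
    linarith

lemma dd_real_nonneg {I : Set ℝ} {h : ℝ → ℝ} (hc : ConvexOn ℝ I h) {x m y : ℝ}
    (hx : x ∈ I) (hy : y ∈ I) (hxm : x < m) (hmy : m < y) :
    0 ≤ 1/((m-x)*(y-x)) * h x + 1/((x-m)*(y-m)) * h m + 1/((x-y)*(m-y)) * h y := by
  have h1 : 0 < m - x := sub_pos.mpr hxm
  have h2 : 0 < y - m := sub_pos.mpr hmy
  have h3 : 0 < y - x := by linarith
  have key : h m ≤ (y-m)/(y-x) * h x + (m-x)/(y-x) * h y := by
    have hla : 0 ≤ (y-m)/(y-x) := by positivity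
    have hlb : 0 ≤ (m-x)/(y-x) := by positivity
    have hsum : (y-m)/(y-x) + (m-x)/(y-x) = 1 := by field_simp; ring
    have hcomb : (y-m)/(y-x) * x + (m-x)/(y-x) * y = m := by field_simp; ring
    have := hc.2 hx hy hla hlb hsum
    simpa [smul_eq_mul, hcomb] using this
  have key2 : (y-x) * h m ≤ (y-m) * h x + (m-x) * h y := by
    rw [← sub_nonneg]
    have := mul_le_mul_of_nonneg_left key h3.le
    have hne : (y-x) ≠ 0 := h3.ne'
    calc (0:ℝ) ≤ (y-x) * ((y-m)/(y-x) * h x + (m-x)/(y-x) * h y) - (y-x) * h m := by linarith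
    _ = (y-m) * h x + (m-x) * h y - (y-x) * h m := by field_simp
  have heq : 1/((m-x)*(y-x)) * h x + 1/((x-m)*(y-m)) * h m + 1/((x-y)*(m-y)) * h y
      = ((y-m) * h x + (m-x) * h y - (y-x) * h m) / ((m-x)*(y-x)*(y-m)) := by
    have n1 : m - x ≠ 0 := h1.ne'
    have n2 : y - m ≠ 0 := h2.ne'
    have n3 : y - x ≠ 0 := h3.ne'
    have n4 : x - m ≠ 0 := by intro hc; apply n1; linarith
    have n5 : x - y ≠ 0 := by intro hc; apply n3; linarith
    have n6 : m - y ≠ 0 := by intro hc; apply n2; linarith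
    field_simp
    ring
  rw [heq]
  apply div_nonneg (by linarith) (by positivity)


lemma one_sub_mem_qzero {t : ℝ} (htQ : t ∈ Qone) : (1-t) ∈ Qzero := by
  have := qone_add_qone 1 one_mem_qone (-t) (neg_mem_qone htQ)
  simpa [sub_eq_add_neg] using this

open Classical in
lemma upper_part {I : Set ℝ} (hI : Set.OrdConnected I) {a : ℝ} (haI : IsGreatest I a)
    (haQ : a ∈ Qone) {h : ℝ → ℝ} (hconv : ConvexOn ℝ I h) {f : ℝ → EReal}
    (hf : ∀ x ∈ I, f x = if x ∈ (I ∩ Qzero) ∪ {a} then ((h x : ℝ) : EReal) else ⊤)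
    {t : ℝ} (ht0 : 0 < t) (ht1 : t < 1) (htQ : t ∈ Qone) :
    UpperConvexWrt I (fun x y => t * x + (1 - t) * y) f := by
  intro x hx y hy hxy
  show 0 ≤ udd f x (t * x + (1 - t) * y) y
  set m := t * x + (1 - t) * y with hm
  have hxm : x < m := by nlinarith
  have hmy : m < y := by nlinarith
  have hmI : m ∈ I := hI.out hx hy ⟨hxm.le, hmy.le⟩
  have hfx := hf x hx
  have hfy := hf y hy
  have hfm := hf m hmI
  unfold udd
  by_cases hx0 : x ∈ (I ∩ Qzero) ∪ {a}
  · by_cases hy0 : y ∈ (I ∩ Qzero) ∪ {a}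
    · have hxQ : x ∈ Qzero := by
        rcases hx0 with h' | h'
        · exact h'.2
        · exfalso
          rw [Set.mem_singleton_iff] at h'
          subst h'
          exact absurd (haI.2 hy) (not_le.mpr hxy)
      have hyQ : y ∈ Qzero ∨ y ∈ Qone := by
        rcases hy0 with h' | h'
        · exact Or.inl h'.2
        · rw [Set.mem_singleton_iff] at h'
          subst h'
          exact Or.inr haQ
      have h1t : (1-t) ∈ Qzero := one_sub_mem_qzero htQ
      have htx : t * x ∈ Qzero := by
        have := qzero_mul_qone x hxQ t htQ
        rwa [mul_comm] at this
      have h1ty : (1-t) * y ∈ Qzero := by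
        rcases hyQ with h' | h'
        · exact qzero_mul_qzero _ h1t _ h'
        · exact qzero_mul_qone _ h1t _ h'
      have hmQ : m ∈ Qzero := qzero_add_qzero _ htx _ h1ty
      have hmmem : m ∈ (I ∩ Qzero) ∪ {a} := Set.mem_union_left _ ⟨hmI, hmQ⟩
      rw [hfx, if_pos hx0, hfy, if_pos hy0, hfm, if_pos hmmem]
      rw [← EReal.coe_mul, ← EReal.coe_mul, ← EReal.coe_mul, usum_coe, usum_coe]
      exact_mod_cast EReal.coe_nonneg.mpr (dd_real_nonneg hconv hx hy hxm hmy)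
    · rw [hfy, if_neg hy0]
      have hc3 : (0:ℝ) < 1/((x-y)*(m-y)) := by
        apply one_div_pos.mpr
        have heq : (x-y)*(m-y) = (y-x)*(y-m) := by ring
        rw [heq]
        exact mul_pos (by linarith) (by linarith)
      rw [EReal.coe_mul_top_of_pos hc3, usum_top_right]
      exact le_top
  · rw [hfx, if_neg hx0]
    have hc1 : (0:ℝ) < 1/((m-x)*(y-x)) := by
      apply one_div_pos.mpr
      exact mul_pos (by linarith) (by linarith)
    rw [EReal.coe_mul_top_of_pos hc1, usum_top_left, usum_top_left]
    exact le_top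

open Classical in
lemma lower_part {I : Set ℝ} (hI : Set.OrdConnected I) {a : ℝ} (haI : IsGreatest I a)
    (haQ : a ∈ Qone) {b : ℝ} (hbI : b ∈ I) (hba : b < a) {h : ℝ → ℝ}
    {f : ℝ → EReal}
    (hf : ∀ x ∈ I, f x = if x ∈ (I ∩ Qzero) ∪ {a} then ((h x : ℝ) : EReal) else ⊤)
    {t : ℝ} (ht0 : 0 < t) (ht1 : t < 1) (htQ : t ∈ Qone) :
    ¬ UpperConvexWrt I (fun x y => (1 - t) * x + t * y) f := by
  intro hcon
  obtain ⟨x, hxQ, hbx, hxa⟩ := qzero_dense hba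
  have hxI : x ∈ I := hI.out hbI haI.1 ⟨hbx.le, hxa.le⟩
  have key := hcon x hxI a haI.1 hxa
  simp only [udd] at key
  set m := (1-t)*x + t*a with hm
  have hxm : x < m := by nlinarith
  have hma : m < a := by nlinarith
  have hmI : m ∈ I := hI.out hxI haI.1 ⟨hxm.le, hma.le⟩
  have h1t : (1-t) ∈ Qzero := one_sub_mem_qzero htQ
  have hmQ1 : m ∈ Qone := by
    have h1 : (1-t)*x ∈ Qzero := qzero_mul_qzero _ h1t _ hxQ
    have h2 : t*a ∈ Qone := qone_mul_qone _ htQ _ haQ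
    exact qzero_add_qone _ h1 _ h2
  have hmnot : m ∉ (I ∩ Qzero) ∪ {a} := by
    rintro (⟨_, hq⟩ | hq)
    · exact Set.disjoint_left.mp qzero_qone_disj hq hmQ1
    · rw [Set.mem_singleton_iff] at hq
      exact hma.ne hq
  have hfm : f m = ⊤ := by rw [hf m hmI, if_neg hmnot]
  have hxmem : x ∈ (I ∩ Qzero) ∪ {a} := Set.mem_union_left _ ⟨hxI, hxQ⟩
  have hamem : a ∈ (I ∩ Qzero) ∪ {a} := Set.mem_union_right _ (Set.mem_singleton a)
  have hfx : f x = ((h x : ℝ):EReal) := by rw [hf x hxI, if_pos hxmem]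
  have hfa : f a = ((h a : ℝ):EReal) := by rw [hf a haI.1, if_pos hamem]
  have hc2 : 1/((x-m)*(a-m)) < 0 := by
    apply one_div_neg.mpr
    exact mul_neg_of_neg_of_pos (by linarith) (by linarith)
  rw [hfm, hfx, hfa, EReal.coe_mul_top_of_neg hc2, ← EReal.coe_mul, ← EReal.coe_mul,
    usum_coe_bot, usum_bot_coe] at key
  simp at key

open Classical in
/-- `ℚ₀` and `ℚ₁` are disjoint subsets of `ℚ` with the stated additive
and multiplicative closure properties; moreover, for an interval `I` whose supremum `a`
belongs to `I ∩ ℚ₁`, a convex `h : I → ℝ`, and `f = h` on `(I ∩ ℚ₀) ∪ {a}`, `f = +∞`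
elsewhere on `I`, the function `f` is upper `A_t`-convex but not upper `A_{1-t}`-convex
for every `t ∈ (0,1) ∩ ℚ₁`. -/
theorem stmt14 :
    Qzero ⊆ Set.range ((↑) : ℚ → ℝ) ∧
    Qone ⊆ Set.range ((↑) : ℚ → ℝ) ∧
    Disjoint Qzero Qone ∧
    (∀ x ∈ Qzero, ∀ y ∈ Qzero, x + y ∈ Qzero) ∧
    (∀ x ∈ Qzero, ∀ y ∈ Qone, x + y ∈ Qone) ∧
    (∀ x ∈ Qone, ∀ y ∈ Qone, x + y ∈ Qzero) ∧
    (∀ x ∈ Qzero, ∀ y ∈ Qzero, x * y ∈ Qzero) ∧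
    (∀ x ∈ Qzero, ∀ y ∈ Qone, x * y ∈ Qzero) ∧
    (∀ x ∈ Qone, ∀ y ∈ Qone, x * y ∈ Qone) ∧
    (∀ (I : Set ℝ), Set.OrdConnected I →
      ∀ a : ℝ, IsGreatest I a → a ∈ Qone → (∃ b ∈ I, b < a) →
      ∀ h : ℝ → ℝ, ConvexOn ℝ I h →
      ∀ f : ℝ → EReal,
        (∀ x ∈ I, f x = if x ∈ (I ∩ Qzero) ∪ {a} then ((h x : ℝ) : EReal) else ⊤) →
      ∀ t ∈ Set.Ioo (0 : ℝ) 1, t ∈ Qone →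
        UpperConvexWrt I (fun x y => t * x + (1 - t) * y) f ∧
        ¬ UpperConvexWrt I (fun x y => (1 - t) * x + t * y) f) := by
  refine ⟨qzero_sub_rat, qone_sub_rat, qzero_qone_disj, qzero_add_qzero, qzero_add_qone,
    qone_add_qone, qzero_mul_qzero, qzero_mul_qone, qone_mul_qone, ?_⟩
  rintro I hI a haI haQ ⟨b, hbI, hba⟩ h hconv f hf t ht htQ
  exact ⟨upper_part hI haI haQ hconv hf ht.1 ht.2 htQ,
    lower_part hI haI haQ hbI hba hf ht.1 ht.2 htQ⟩
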